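/- The set of quantum combs is convex and compact: for finite-dimensional complex Hilbert spaces H_0, …, H_{2N+1}, the set of positive semidefinite operators R on ⊗_{j=0}^{2N+1} H_j for which there exist operators R^{(n)} on ⊗_{j=0}^{2n+1} H_j with R^{(N)} = R, R^{(-1)} = 1, and Tr_{2n+1}[R^{(n)}] = I_{2n} ⊗ R^{(n-1)} for all n = 0, …, N, is a convex and compact subset of the (finite-dimensional) real vector space of Hermitian operators on ⊗_{j=0}^{2N+1} H_j. -/

import Mathlib

open Matrix Kronecker ComplexOrder

/-- The partial trace over the last tensor factor of a matrix indexed by dependent tuples: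
`(Tr_last M)_{p,q} = Σ_x M_{(p,x),(q,x)}`. -/
noncomputable def trLast {k : ℕ} {α : Fin (k + 1) → Type*} [∀ j, Fintype (α j)]
    (M : Matrix (∀ j, α j) (∀ j, α j) ℂ) :
    Matrix (∀ j : Fin k, α j.castSucc) (∀ j : Fin k, α j.castSucc) ℂ :=
  fun p q => ∑ x : α (Fin.last k), M (Fin.snoc p x) (Fin.snoc q x)

/-- The set of quantum combs with `N` slots on the spaces `H_0, …, H_{2N+1}`
(`H_j = ℂ^{d j}`, even indices inputs, odd indices outputs): the positive semidefinite
operators `R` on `⊗_{j=0}^{2N+1} H_j` admitting a chain of operators `R^{(n)}` (encoded as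
`T (n+1) = R^{(n)}`) with `R^{(N)} = R`, `R^{(-1)} = 1` and the recursive normalization
constraints `Tr_{2n+1}[R^{(n)}] = I_{2n} ⊗ R^{(n-1)}` for all `n = 0, …, N`. -/
noncomputable def combSet (N : ℕ) (d : Fin (2*N+2) → ℕ) :
    Set (Matrix (∀ j, Fin (d j)) (∀ j, Fin (d j)) ℂ) :=
  {R | R.PosSemidef ∧
    ∃ T : ∀ n : Fin (N+2), Matrix (∀ j : Fin (2*n.val), Fin (d (j.castLE (by omega))))
                                  (∀ j : Fin (2*n.val), Fin (d (j.castLE (by omega)))) ℂ,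
      T 0 = 1 ∧ T (Fin.last (N+1)) = R ∧
      ∀ n : Fin (N+1),
        trLast (T n.succ) = fun p q =>
          (if p (Fin.last (2*n.val)) = q (Fin.last (2*n.val)) then (1:ℂ) else 0) *
            T n.castSucc (fun j => p j.castSucc) (fun j => q j.castSucc)}

namespace CombAux

/-! ### Generic matrix lemmas -/

lemma key_quad {I : Type*} [Fintype I] [DecidableEq I] {M : Matrix I I ℂ}
    (h : M.PosSemidef) (i j : I) (hij : i ≠ j) (s : ℝ) :
    0 ≤ (M i i).re * s^2 - 2 * ‖M i j‖^2 * s + ‖M i j‖^2 * (M j j).re := by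
  set m := M i j with hm
  set x : I → ℂ := Pi.single i (-s : ℂ) + Pi.single j (star m) with hxdef
  have hq := h.re_dotProduct_nonneg x
  have hji : M j i = star m := by
    have := congrFun (congrFun h.1 j) i
    simpa [Matrix.conjTranspose_apply] using this.symm
  have hmv : ∀ k, (M *ᵥ x) k = M k i * (-(s:ℂ)) + M k j * star m := by
    intro k
    simp only [hxdef, Matrix.mulVec, dotProduct, Pi.add_apply, Pi.single_apply,
      mul_add, Finset.sum_add_distrib, mul_ite, mul_zero, Finset.sum_ite_eq',
      Finset.mem_univ, if_true]
  have hsx : ∀ k, star x k = (if k = i then -(s:ℂ) else 0) + (if k = j then m else 0) := by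
    intro k
    by_cases hki : k = i
    · subst hki; simp [hxdef, Pi.single_apply, hij, Complex.star_def, Complex.conj_ofReal]
    · by_cases hkj : k = j
      · subst hkj; simp [hxdef, Pi.single_apply, hki]
      · simp [hxdef, Pi.single_apply, hki, hkj]
  have hmm : m * star m = ((‖m‖ : ℝ) : ℂ)^2 := by
    rw [Complex.star_def, Complex.mul_conj]
    norm_cast
    rw [Complex.normSq_eq_norm_sq]
  have hq3 : dotProduct (star x) (M *ᵥ x)
      = ((s^2 : ℝ) : ℂ) * M i i + (((-2) * s * ‖m‖^2 : ℝ) : ℂ) + ((‖m‖^2 : ℝ) : ℂ) * M j j := by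
    rw [dotProduct]
    have hterm : ∀ k, star x k * (M *ᵥ x) k =
        (if k = i then (-(s:ℂ)) * (M k i * (-(s:ℂ)) + M k j * star m) else 0)
        + (if k = j then m * (M k i * (-(s:ℂ)) + M k j * star m) else 0) := by
      intro k; rw [hsx k, hmv k, add_mul]
      congr 1 <;> split <;> simp
    rw [Finset.sum_congr rfl fun k _ => hterm k, Finset.sum_add_distrib,
      Finset.sum_ite_eq', Finset.sum_ite_eq']
    simp only [Finset.mem_univ, if_true, hji]
    push_cast
    linear_combination (M j j - 2*(s:ℂ)) * hmm
  rw [hq3] at hq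
  simp only [RCLike.re_to_complex, Complex.add_re, Complex.re_ofReal_mul,
    Complex.ofReal_re] at hq
  linarith

lemma entry_bound {I : Type*} [Fintype I] [DecidableEq I] {M : Matrix I I ℂ}
    (h : M.PosSemidef) (i j : I) : ‖M i j‖ ≤ (M.trace).re := by
  have hdiag : ∀ k, 0 ≤ M k k := by
    intro k
    have := h.dotProduct_mulVec_nonneg (Pi.single k 1)
    simpa [Matrix.mulVec_single, dotProduct, Pi.single_apply, apply_ite] using this
  have hdre : ∀ k, 0 ≤ (M k k).re := fun k => (Complex.le_def.mp (hdiag k)).1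
  have htr : (M.trace).re = ∑ k, (M k k).re := by
    simp [Matrix.trace, Matrix.diag, Complex.re_sum]
  have hle : ∀ k, (M k k).re ≤ (M.trace).re := by
    intro k
    rw [htr]
    exact Finset.single_le_sum (fun l _ => hdre l) (Finset.mem_univ k)
  have ht0 : 0 ≤ (M.trace).re := (hdre i).trans (hle i)
  by_cases hij : i = j
  · subst hij
    have him : (M i i).im = 0 := ((Complex.le_def.mp (hdiag i)).2).symm
    have hz : M i i = ((M i i).re : ℂ) := by
      apply Complex.ext <;> simp [him]
    have : ‖M i i‖ = (M i i).re := by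
      rw [hz]
      simp [abs_of_nonneg (hdre i)]
    rw [this]; exact hle i
  · set a := (M i i).re
    set b := (M j j).re
    set t := (M.trace).re
    have key := key_quad h i j hij
    have hsq : ‖M i j‖^2 ≤ t^2 := by
      rcases eq_or_lt_of_le (hdre i) with ha | ha
      · have hkb := key (b + 1)
        nlinarith [sq_nonneg ‖M i j‖, hdre j, ht0, mul_nonneg ht0 ht0, ha.symm.le, ha.le,
          mul_nonneg (sq_nonneg ‖M i j‖) (hdre j)]
      · have hk := key (‖M i j‖^2 / a)
        have ha' : a ≠ 0 := ne_of_gt ha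
        have heq : a * ((M i i).re * (‖M i j‖^2/a)^2 - 2*‖M i j‖^2*(‖M i j‖^2/a)
            + ‖M i j‖^2*(M j j).re)
            = -(‖M i j‖^2*‖M i j‖^2) + a*b*‖M i j‖^2 := by
          field_simp
          ring
        have h5 : 0 ≤ -(‖M i j‖^2*‖M i j‖^2) + a*b*‖M i j‖^2 := by
          rw [← heq]; exact mul_nonneg ha.le hk
        have hab : a * b ≤ t * t := mul_le_mul (hle i) (hle j) (hdre j) ht0
        have h6 : ‖M i j‖^2 * ‖M i j‖^2 ≤ (t*t) * ‖M i j‖^2 := by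
          nlinarith [mul_le_mul_of_nonneg_right hab (sq_nonneg (‖M i j‖))]
        by_cases hm0 : ‖M i j‖ = 0
        · rw [hm0]; nlinarith [mul_nonneg ht0 ht0]
        · have hpos : 0 < ‖M i j‖^2 := by positivity
          have := le_of_mul_le_mul_right (by nlinarith [h6] :
            ‖M i j‖^2 * ‖M i j‖^2 ≤ t^2 * ‖M i j‖^2) hpos
          exact this
    have := Real.sqrt_le_sqrt hsq
    rwa [Real.sqrt_sq (norm_nonneg _), Real.sqrt_sq ht0] at this

lemma isClosed_nonneg : IsClosed {z : ℂ | 0 ≤ z} := by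
  have h : {z : ℂ | 0 ≤ z} = Complex.re ⁻¹' Set.Ici 0 ∩ Complex.im ⁻¹' {0} := by
    ext z
    simp [Complex.le_def, eq_comm]
  rw [h]
  exact (isClosed_Ici.preimage Complex.continuous_re).inter
    (isClosed_singleton.preimage Complex.continuous_im)

lemma isClosed_posSemidef' {I : Type*} [Fintype I] [DecidableEq I] :
    IsClosed {M : Matrix I I ℂ | M.PosSemidef} := by
  have h : {M : Matrix I I ℂ | M.PosSemidef} =
      {M : Matrix I I ℂ | Mᴴ = M} ∩ ⋂ x : I → ℂ, {M | 0 ≤ star x ⬝ᵥ M *ᵥ x} := by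
    ext M
    simp only [Set.mem_setOf_eq, Set.mem_inter_iff, Set.mem_iInter]
    exact posSemidef_iff_dotProduct_mulVec
  rw [h]
  refine (isClosed_eq (continuous_id.matrix_conjTranspose) continuous_id).inter
    (isClosed_iInter fun x => ?_)
  exact isClosed_nonneg.preimage
    (continuous_const.dotProduct (continuous_id.matrix_mulVec continuous_const))

lemma posSemidef_real_smul {I : Type*} [Fintype I] {M : Matrix I I ℂ}
    (h : M.PosSemidef) {a : ℝ} (ha : 0 ≤ a) : (a • M).PosSemidef := by
  refine posSemidef_iff_dotProduct_mulVec.mpr ⟨?_, ?_⟩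
  · show (a • M)ᴴ = a • M
    ext i j
    have hH := congrFun (congrFun h.1 i) j
    simp only [Matrix.conjTranspose_apply] at hH ⊢
    simp only [Matrix.smul_apply, star_smul, star_trivial, hH]
  · intro x
    have h1 : (a • M) *ᵥ x = a • (M *ᵥ x) := Matrix.smul_mulVec a M x
    rw [h1, dotProduct_smul]
    have h2 : a • (dotProduct (star x) (M *ᵥ x))
        = ((a : ℂ)) * (dotProduct (star x) (M *ᵥ x)) := Complex.real_smul
    rw [h2]
    have ha' : (0:ℂ) ≤ (a:ℂ) := by exact_mod_cast ha
    exact mul_nonneg ha' (h.dotProduct_mulVec_nonneg x)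

/-! ### Sums over snoc tuples -/

lemma sum_pi_snoc {k : ℕ} {α : Fin (k+1) → Type*} [∀ j, Fintype (α j)] {M : Type*}
    [AddCommMonoid M] (f : (∀ j, α j) → M) :
    ∑ p, f p = ∑ x : α (Fin.last k), ∑ p : ∀ j : Fin k, α j.castSucc, f (Fin.snoc p x) := by
  rw [← Equiv.sum_comp (Fin.snocEquiv α) f, Fintype.sum_prod_type]
  simp [Fin.snocEquiv]

lemma trace_trLast {k : ℕ} {α : Fin (k+1) → Type*} [∀ j, Fintype (α j)]
    (M : Matrix (∀ j, α j) (∀ j, α j) ℂ) :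
    M.trace = (trLast M).trace := by
  rw [Matrix.trace, Matrix.trace]
  simp only [Matrix.diag]
  rw [sum_pi_snoc (fun p => M p p)]
  rw [Finset.sum_comm]
  rfl

/-! ### The set of comb pairs -/

variable (N : ℕ) (d : Fin (2*N+2) → ℕ)

abbrev XT := Matrix (∀ j : Fin (2*N+2), Fin (d j)) (∀ j : Fin (2*N+2), Fin (d j)) ℂ

abbrev YT := ∀ n : Fin (N+2), Matrix (∀ j : Fin (2*n.val), Fin (d (j.castLE (by omega))))
                                  (∀ j : Fin (2*n.val), Fin (d (j.castLE (by omega)))) ℂ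

def Kset : Set (XT N d × YT N d) :=
  {z | z.1.PosSemidef ∧ z.2 0 = 1 ∧ z.2 (Fin.last (N+1)) = z.1 ∧
    ∀ n : Fin (N+1),
      trLast (z.2 n.succ) = fun p q =>
        (if p (Fin.last (2*n.val)) = q (Fin.last (2*n.val)) then (1:ℂ) else 0) *
          z.2 n.castSucc (fun j => p j.castSucc) (fun j => q j.castSucc)}

lemma combSet_eq_image : combSet N d = Prod.fst '' Kset N d := by
  ext R
  constructor
  · rintro ⟨hR, T, h0, hN, hc⟩
    exact ⟨(R, T), ⟨hR, h0, hN, hc⟩, rfl⟩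
  · rintro ⟨⟨R', T⟩, ⟨hR, h0, hN, hc⟩, rfl⟩
    exact ⟨hR, T, h0, hN, hc⟩

/-- extended dimension function -/
def e (i : ℕ) : ℕ := if h : i < 2*N+2 then d ⟨i, h⟩ else 1

lemma trace_T {z : XT N d × YT N d} (hz : z ∈ Kset N d) :
    ∀ k : ℕ, ∀ hk : k < N+2,
      (z.2 ⟨k, hk⟩).trace = ∏ m ∈ Finset.range k, (e N d (2*m) : ℂ) := by
  intro k
  induction k with
  | zero =>
    intro hk
    have h0 : (⟨0, hk⟩ : Fin (N+2)) = 0 := rfl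
    rw [h0, hz.2.1]
    simp [Matrix.trace, Matrix.one_apply_eq]
    exact Fintype.sum_unique (fun _ => (1:ℂ))
  | succ k ih =>
    intro hk
    have hkN : k < N + 1 := by omega
    set n : Fin (N+1) := ⟨k, hkN⟩ with hn
    have hsucc : (⟨k+1, hk⟩ : Fin (N+2)) = n.succ := rfl
    have hcast : n.castSucc = (⟨k, by omega⟩ : Fin (N+2)) := rfl
    rw [hsucc, trace_trLast, hz.2.2.2 n]
    simp only [Matrix.trace]
    simp only [Matrix.diag, if_pos rfl, if_true, one_mul]
    refine Eq.trans (sum_pi_snoc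
      (α := fun j : Fin (2*k+1) => Fin (d (Fin.castLE (by omega : 2*k+1+1 ≤ 2*N+2) j.castSucc)))
      (fun p => z.2 n.castSucc (fun j => p j.castSucc) (fun j => p j.castSucc))) ?_
    simp only [Fin.snoc_castSucc]
    rw [Finset.sum_const, Finset.card_univ]
    have ihe : (z.2 n.castSucc).trace = ∏ m ∈ Finset.range k, (e N d (2*m) : ℂ) :=
      ih (by omega : k < N + 2)
    rw [Finset.prod_range_succ, ← ihe]
    rw [nsmul_eq_mul, mul_comm ((z.2 n.castSucc).trace)]
    congr 1
    · simp only [Fintype.card_fin]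
      have hfin : Fin.castLE (by omega : 2*k+1+1 ≤ 2*N+2) (Fin.last (2*k)).castSucc
          = (⟨2*k, by omega⟩ : Fin (2*N+2)) := Fin.ext (by simp)
      rw [hfin, e, dif_pos (by omega : 2*k < 2*N+2)]

/-- all-dimensions product -/
def Pd : ℕ := ∏ i ∈ Finset.range (2*N+2), e N d i
/-- product of even dims -/
def Cn : ℕ := ∏ m ∈ Finset.range (N+1), e N d (2*m)

lemma bound_R {z : XT N d × YT N d} (hz : z ∈ Kset N d) (p q : ∀ j : Fin (2*N+2), Fin (d j)) :
    ‖z.1 p q‖ ≤ (Cn N d : ℝ) := by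
  classical
  have h1 := entry_bound hz.1 p q
  have h2 : z.1.trace = ((Cn N d : ℕ) : ℂ) := by
    have ht := trace_T N d hz (N+1) (by omega)
    rw [show (⟨N+1, by omega⟩ : Fin (N+2)) = Fin.last (N+1) from rfl, hz.2.2.1] at ht
    rw [ht, Cn, Nat.cast_prod]
  rw [h2] at h1
  simpa using h1

lemma one_le_e (hd : ∀ j, 0 < d j) (i : ℕ) : 1 ≤ e N d i := by
  rw [e]; split
  · exact hd _
  · exact le_refl 1

lemma one_le_Pd (hd : ∀ j, 0 < d j) : 1 ≤ Pd N d :=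
  Finset.one_le_prod' fun i _ => one_le_e N d hd i

lemma e_le_P (hd : ∀ j, 0 < d j) {i : ℕ} (hi : i < 2*N+2) : e N d i ≤ Pd N d :=
  Finset.single_le_prod' (fun m _ => one_le_e N d hd m) (Finset.mem_range.mpr hi)

set_option maxHeartbeats 2000000 in
lemma bound_T (hd : ∀ j, 0 < d j) {z : XT N d × YT N d} (hz : z ∈ Kset N d) :
    ∀ k : ℕ, ∀ m : Fin (N+2), m.val + k = N+1 → ∀ p q,
      ‖z.2 m p q‖ ≤ (Cn N d : ℝ) * (Pd N d : ℝ)^k := by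
  intro k
  induction k with
  | zero =>
    intro m hm p q
    have hml : m = Fin.last (N+1) := Fin.ext (by simpa using hm)
    subst hml
    rw [hz.2.2.1]
    simpa using bound_R N d hz p q
  | succ k ih =>
    rintro ⟨v, hv⟩ hm p q
    have hvN : v + (k+1) = N+1 := by simpa using hm
    have hv' : v < N+1 := by omega
    have x0 : Fin (d (Fin.castLE (by omega : 2*v+1 ≤ 2*N+2) (Fin.last (2*v)))) := ⟨0, hd _⟩
    have hcon := congrFun (congrFun (hz.2.2.2 ⟨v, hv'⟩)
      (Fin.snoc (α := fun j : Fin (2*v+1) =>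
        Fin (d (Fin.castLE (by omega : 2*v+1+1 ≤ 2*N+2) j.castSucc))) p x0))
      (Fin.snoc (α := fun j : Fin (2*v+1) =>
        Fin (d (Fin.castLE (by omega : 2*v+1+1 ≤ 2*N+2) j.castSucc))) q x0)
    simp only [Fin.snoc_last, Fin.snoc_castSucc, if_pos rfl, if_true, one_mul] at hcon
    have hgoal : ‖z.2 (⟨v, hv⟩ : Fin (N+2)) p q‖
        = ‖trLast (z.2 (⟨v, hv'⟩ : Fin (N+1)).succ) (Fin.snoc p x0) (Fin.snoc q x0)‖ := by
      rw [hcon]; rfl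
    rw [hgoal]
    simp only [trLast]
    refine le_trans (norm_sum_le _ _) ?_
    have hbd : ∀ x, ‖z.2 (⟨v, hv'⟩ : Fin (N+1)).succ
        (Fin.snoc (Fin.snoc p x0) x) (Fin.snoc (Fin.snoc q x0) x)‖
        ≤ (Cn N d : ℝ) * (Pd N d : ℝ)^k := by
      intro x
      refine ih _ ?_ _ _
      simp only [Fin.succ]
      omega
    refine le_trans (Finset.sum_le_sum fun x _ => hbd x) ?_
    rw [Finset.sum_const, Finset.card_univ, nsmul_eq_mul]
    have hcard : (Fintype.card (Fin (d (Fin.castLE (by omega : 2*v+1+1 ≤ 2*N+2)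
        (Fin.last (2*v+1))))) : ℝ) ≤ (Pd N d : ℝ) := by
      rw [Fintype.card_fin]
      have he : d (Fin.castLE (by omega : 2*v+1+1 ≤ 2*N+2) (Fin.last (2*v+1)))
          = e N d (2*v+1) := by
        rw [e, dif_pos (by omega : 2*v+1 < 2*N+2)]
        exact congrArg d (Fin.ext (by simp))
      rw [he]
      exact_mod_cast e_le_P N d hd (by omega)
    have hpos : (0:ℝ) ≤ (Cn N d : ℝ) * (Pd N d : ℝ)^k := by positivity
    calc _ ≤ (Pd N d : ℝ) * ((Cn N d : ℝ) * (Pd N d : ℝ)^k) :=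
            mul_le_mul_of_nonneg_right hcard hpos
      _ = (Cn N d : ℝ) * (Pd N d : ℝ)^(k+1) := by ring

lemma isClosed_Kset : IsClosed (Kset N d) := by
  have hK : Kset N d = {z : XT N d × YT N d | z.1.PosSemidef} ∩
      ({z : XT N d × YT N d | z.2 0 = 1} ∩
      ({z : XT N d × YT N d | z.2 (Fin.last (N+1)) = z.1} ∩
      (⋂ n : Fin (N+1), {z : XT N d × YT N d |
        trLast (z.2 n.succ) = fun p q =>
          (if p (Fin.last (2*n.val)) = q (Fin.last (2*n.val)) then (1:ℂ) else 0) *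
            z.2 n.castSucc (fun j => p j.castSucc) (fun j => q j.castSucc)}))) := by
    ext z
    simp only [Kset, Set.mem_setOf_eq, Set.mem_inter_iff, Set.mem_iInter]
  rw [hK]
  have hsnd : Continuous fun z : XT N d × YT N d => z.2 := continuous_snd
  refine (isClosed_posSemidef'.preimage continuous_fst).inter ?_
  refine (isClosed_eq ((continuous_apply (0 : Fin (N+2))).comp hsnd)
    continuous_const).inter ?_
  refine (isClosed_eq ((continuous_apply (Fin.last (N+1))).comp hsnd)
    continuous_fst).inter ?_
  refine isClosed_iInter fun n => ?_
  have hTs : Continuous fun z : XT N d × YT N d => z.2 n.succ :=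
    (continuous_apply n.succ).comp hsnd
  have hTc : Continuous fun z : XT N d × YT N d => z.2 n.castSucc :=
    (continuous_apply n.castSucc).comp hsnd
  refine isClosed_eq ?_ ?_
  · apply continuous_matrix
    intro p q
    exact continuous_finset_sum _ fun x _ => hTs.matrix_elem _ _
  · apply continuous_matrix
    intro p q
    exact continuous_const.mul (hTc.matrix_elem _ _)

lemma isCompact_Kset (hd : ∀ j, 0 < d j) : IsCompact (Kset N d) := by
  set C : ℝ := (Cn N d : ℝ) * (Pd N d : ℝ)^(N+1) with hC
  have hC0 : (0:ℝ) ≤ C := by positivity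
  set SX : Set (XT N d) :=
    Set.pi Set.univ (fun _ : ∀ j : Fin (2*N+2), Fin (d j) =>
      Set.pi Set.univ (fun _ : ∀ j : Fin (2*N+2), Fin (d j) =>
        Metric.closedBall (0:ℂ) C)) with hSX
  set SY : Set (YT N d) :=
    Set.pi Set.univ (fun n : Fin (N+2) =>
      Set.pi Set.univ (fun _ => Set.pi Set.univ (fun _ => Metric.closedBall (0:ℂ) C)))
    with hSY
  have hSXc : IsCompact SX :=
    isCompact_univ_pi fun _ => isCompact_univ_pi fun _ => isCompact_closedBall _ _
  have hSYc : IsCompact SY :=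
    isCompact_univ_pi fun _ => isCompact_univ_pi fun _ => isCompact_univ_pi fun _ =>
      isCompact_closedBall _ _
  refine (hSXc.prod hSYc).of_isClosed_subset (isClosed_Kset N d) ?_
  intro z hz
  have hPd' : (1:ℝ) ≤ (Pd N d : ℝ) := by exact_mod_cast one_le_Pd N d hd
  have hPd1 : (1:ℝ) ≤ (Pd N d : ℝ)^(N+1) := by
    calc (1:ℝ) = 1^(N+1) := (one_pow _).symm
    _ ≤ (Pd N d : ℝ)^(N+1) := pow_le_pow_left₀ zero_le_one hPd' _
  constructor
  · intro p _
    intro q _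
    rw [mem_closedBall_zero_iff]
    calc ‖z.1 p q‖ ≤ (Cn N d : ℝ) := bound_R N d hz p q
    _ ≤ C := le_mul_of_one_le_right (Nat.cast_nonneg _) hPd1
  · intro n _
    intro p _
    intro q _
    rw [mem_closedBall_zero_iff]
    have hk : n.val + (N+1 - n.val) = N+1 := by omega
    refine le_trans (bound_T N d hd hz (N+1 - n.val) n hk p q) ?_
    exact mul_le_mul_of_nonneg_left (pow_le_pow_right₀ hPd' (by omega)) (Nat.cast_nonneg _)

end CombAux

/-- The set of quantum combs is convex and compact: for finite-dimensional
complex Hilbert spaces `H_0, …, H_{2N+1}`, the set of positive semidefinite operators `R` on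
`⊗_{j=0}^{2N+1} H_j` satisfying the recursive comb normalization constraints is a convex and
compact subset of the (finite-dimensional, real) space of Hermitian operators on
`⊗_{j=0}^{2N+1} H_j`  (every member of the set is indeed Hermitian). -/
theorem combSet_convex_compact (N : ℕ) (d : Fin (2*N+2) → ℕ) :
    Convex ℝ (combSet N d) ∧ IsCompact (combSet N d) ∧
      ∀ R ∈ combSet N d, R.IsHermitian := by
  refine ⟨?_, ?_, fun R hR => hR.1.1⟩
  · -- convexity
    rintro R1 ⟨h1, T1, hT10, hT1N, hc1⟩ R2 ⟨h2, T2, hT20, hT2N, hc2⟩ a b ha hb hab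
    refine ⟨(CombAux.posSemidef_real_smul h1 ha).add (CombAux.posSemidef_real_smul h2 hb),
      fun n => a • T1 n + b • T2 n, ?_, ?_, ?_⟩
    · show a • T1 0 + b • T2 0 = 1
      rw [hT10, hT20, ← add_smul, hab, one_smul]
    · show a • T1 (Fin.last (N+1)) + b • T2 (Fin.last (N+1)) = a • R1 + b • R2
      rw [hT1N, hT2N]
    · intro n
      funext p q
      have e1 := congrFun (congrFun (hc1 n) p) q
      have e2 := congrFun (congrFun (hc2 n) p) q
      simp only [trLast] at e1 e2 ⊢
      simp only [Matrix.add_apply, Matrix.smul_apply, Finset.sum_add_distrib,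
        ← Finset.smul_sum]
      rw [e1, e2]
      simp only [Complex.real_smul]
      ring
  · -- compactness
    by_cases hd : ∀ j, 0 < d j
    · rw [CombAux.combSet_eq_image]
      exact ((CombAux.isCompact_Kset N d hd).image continuous_fst)
    · push_neg at hd
      obtain ⟨j, hj⟩ := hd
      have hj0 : d j = 0 := by omega
      haveI : IsEmpty (∀ i : Fin (2*N+2), Fin (d i)) :=
        ⟨fun p => by have := (p j).2; omega⟩
      haveI : Subsingleton (Matrix (∀ i : Fin (2*N+2), Fin (d i))
          (∀ i : Fin (2*N+2), Fin (d i)) ℂ) :=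
        inferInstanceAs (Subsingleton ((∀ i : Fin (2*N+2), Fin (d i)) →
          (∀ i : Fin (2*N+2), Fin (d i)) → ℂ))
      exact (Set.subsingleton_of_subsingleton (s := combSet N d)).finite.isCompact
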